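/- For n ≥ 3, the number of equivalence classes of S_n under the equivalence generated by making all factors of three adjacent letters with order patterns in {123, 132, 213, 231} interchangeable is exactly n. -/

import Mathlib

/-- A pattern of length 3, given as a relation on the three letter values. -/
abbrev Pat : Type := ℕ → ℕ → ℕ → Prop

def p123 : Pat := fun a b c => a < b ∧ b < c
def p132 : Pat := fun a b c => a < c ∧ c < b
def p213 : Pat := fun a b c => b < a ∧ a < c
def p231 : Pat := fun a b c => c < a ∧ a < b
def p312 : Pat := fun a b c => b < c ∧ c < a
def p321 : Pat := fun a b c => c < b ∧ b < a

/-- The factor of `w` at positions `i, i+1, i+2` has order pattern `p`. -/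
def PatAt {n : ℕ} (w : Equiv.Perm (Fin n)) (i : ℕ) (h : i + 3 ≤ n) (p : Pat) : Prop :=
  p (w ⟨i, by omega⟩).val (w ⟨i + 1, by omega⟩).val (w ⟨i + 2, by omega⟩).val

/-- One replacement move: a factor of three adjacent letters whose pattern lies in some
part `Q` of the replacement partition is rearranged (same letters, all other positions
unchanged) into a factor whose pattern also lies in `Q`. -/
def Step3 {n : ℕ} (parts : Set (Set Pat)) (w w' : Equiv.Perm (Fin n)) : Prop :=
  ∃ Q ∈ parts, ∃ i : ℕ, ∃ h : i + 3 ≤ n,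
    (∀ j : Fin n, (j.val < i ∨ i + 3 ≤ j.val) → w j = w' j) ∧
    (∃ p ∈ Q, PatAt w i h p) ∧ (∃ q ∈ Q, PatAt w' i h q)

/-- The equivalence relation on `S_n` generated by the replacement moves. -/
def PattEquiv {n : ℕ} (parts : Set (Set Pat)) :
    Equiv.Perm (Fin n) → Equiv.Perm (Fin n) → Prop :=
  Relation.EqvGen (Step3 parts)

/-- The number of equivalence classes of `S_n` under the given replacement partition. -/
noncomputable def classCount (n : ℕ) (parts : Set (Set Pat)) : ℕ :=
  Nat.card (Quotient (Setoid.mk (PattEquiv (n := n) parts)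
    (Relation.EqvGen.is_equivalence _)))

/-- `w` avoids every pattern in `P` as a consecutive pattern. -/
def AvoidsAll {n : ℕ} (w : Equiv.Perm (Fin n)) (P : Set Pat) : Prop :=
  ∀ (i : ℕ) (h : i + 3 ≤ n), ∀ p ∈ P, ¬ PatAt w i h p

/-- A V-permutation: the letters strictly decrease until the letter `1`
(the smallest value, `0` in `Fin n`) and then strictly increase. -/
def IsVPerm {n : ℕ} (w : Equiv.Perm (Fin n)) : Prop :=
  ∃ i : Fin n, w i = ⟨0, i.pos⟩ ∧
    (∀ j k : Fin n, j < k → k ≤ i → w k < w j) ∧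
    (∀ j k : Fin n, i ≤ j → j < k → w j < w k)

/-- Motzkin path: steps U=1, F=0, D=-1, partial sums nonnegative, total sum 0. -/
def IsMotzkinPath (l : List ℤ) : Prop :=
  (∀ x ∈ l, x = 1 ∨ x = 0 ∨ x = -1) ∧ (∀ k : ℕ, 0 ≤ (l.take k).sum) ∧ l.sum = 0

/-- The `n`-th Motzkin number: the number of Motzkin paths of length `n`. -/
noncomputable def motzkin (n : ℕ) : ℕ :=
  Nat.card {l : List ℤ // l.length = n ∧ IsMotzkinPath l}


/-! auxiliary development -/

def QS : Set Pat := {p123, p132, p213, p231}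

def QP : Set (Set Pat) := {QS}

lemma patQ {a b c : ℕ} (hab : a ≠ b) (hac : a ≠ c) (hbc : b ≠ c)
    (h : a < b ∨ a < c) : ∃ p ∈ QS, p a b c := by
  rcases Nat.lt_or_ge a b with h1 | h1
  · rcases Nat.lt_or_ge b c with h2 | h2
    · exact ⟨p123, by simp [QS], ⟨h1, h2⟩⟩
    · rcases Nat.lt_or_ge a c with h3 | h3
      · exact ⟨p132, by simp [QS], ⟨h3, by omega⟩⟩
      · exact ⟨p231, by simp [QS], ⟨by omega, h1⟩⟩
  · have h3 : a < c := by omega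
    exact ⟨p213, by simp [QS], ⟨by omega, h3⟩⟩

lemma qs_lt {p : Pat} (hp : p ∈ QS) {a b c : ℕ} (h : p a b c) : a < b ∨ a < c := by
  rcases hp with h' | h' | h' | h' <;> subst h' <;>
    simp only [p123, p132, p213, p231] at h <;> omega

variable {n : ℕ}

/-- The value of `w` at a natural-number position (`0` out of range). -/
def V (w : Equiv.Perm (Fin n)) (l : ℕ) : ℕ :=
  if hl : l < n then (w ⟨l, hl⟩).val else 0

lemma V_def (w : Equiv.Perm (Fin n)) {l : ℕ} (hl : l < n) :
    V w l = (w ⟨l, hl⟩).val := dif_pos hl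

lemma V_lt (w : Equiv.Perm (Fin n)) {l : ℕ} (hl : l < n) : V w l < n := by
  rw [V_def w hl]; exact (w ⟨l, hl⟩).isLt

lemma V_inj (w : Equiv.Perm (Fin n)) {l1 l2 : ℕ} (h1 : l1 < n) (h2 : l2 < n)
    (h : V w l1 = V w l2) : l1 = l2 := by
  rw [V_def w h1, V_def w h2] at h
  have := w.injective (Fin.ext h)
  simpa [Fin.ext_iff] using this

lemma V_ne (w : Equiv.Perm (Fin n)) {l1 l2 : ℕ} (h1 : l1 < n) (h2 : l2 < n)
    (h : l1 ≠ l2) : V w l1 ≠ V w l2 := fun hc => h (V_inj w h1 h2 hc)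

/-- Each value is attained at some position. -/
lemma V_surj (w : Equiv.Perm (Fin n)) {v : ℕ} (hv : v < n) : ∃ l, l < n ∧ V w l = v := by
  obtain ⟨x, hx⟩ := w.surjective ⟨v, hv⟩
  exact ⟨x.val, x.isLt, by rw [V_def w x.isLt]; simp [Fin.eta, hx]⟩

/-- Two permutations are equal iff they have the same values. -/
lemma perm_ext {w w' : Equiv.Perm (Fin n)} (h : ∀ l, l < n → V w l = V w' l) : w = w' := by
  apply Equiv.ext
  intro x
  have := h x.val x.isLt
  rw [V_def w x.isLt, V_def w' x.isLt] at this
  exact Fin.ext (by simpa [Fin.eta] using this)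

lemma stepOf (w σ : Equiv.Perm (Fin n)) (i : ℕ) (h : i + 3 ≤ n)
    (hs : ∀ x : Fin n, σ x ≠ x → i ≤ x.val ∧ x.val < i + 3)
    (h1 : V w i < V w (i+1) ∨ V w i < V w (i+2))
    (h2 : V (w*σ) i < V (w*σ) (i+1) ∨ V (w*σ) i < V (w*σ) (i+2)) :
    Step3 QP w (w * σ) := by
  refine ⟨QS, by simp [QP], i, h, ?_, ?_, ?_⟩
  · intro j hj
    have : σ j = j := by
      by_contra hc
      have := hs j hc; omega
    simp [Equiv.Perm.mul_apply, this]
  · rw [V_def w (by omega : i < n), V_def w (by omega : i+1 < n),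
      V_def w (by omega : i+2 < n)] at h1
    exact patQ (fun hc => absurd (w.injective (Fin.ext hc)) (by simp [Fin.ext_iff]))
      (fun hc => absurd (w.injective (Fin.ext hc)) (by simp [Fin.ext_iff]))
      (fun hc => absurd (w.injective (Fin.ext hc)) (by simp [Fin.ext_iff] <;> omega)) h1
  · rw [V_def (w*σ) (by omega : i < n), V_def (w*σ) (by omega : i+1 < n),
      V_def (w*σ) (by omega : i+2 < n)] at h2
    exact patQ
      (fun hc => absurd ((w*σ).injective (Fin.ext hc)) (by simp [Fin.ext_iff]))
      (fun hc => absurd ((w*σ).injective (Fin.ext hc)) (by simp [Fin.ext_iff]))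
      (fun hc => absurd ((w*σ).injective (Fin.ext hc)) (by simp [Fin.ext_iff] <;> omega)) h2

lemma pe_refl (w : Equiv.Perm (Fin n)) : PattEquiv QP w w := Relation.EqvGen.refl w
lemma pe_symm {w w' : Equiv.Perm (Fin n)} (h : PattEquiv QP w w') : PattEquiv QP w' w :=
  Relation.EqvGen.symm _ _ h
lemma pe_trans {w w' w'' : Equiv.Perm (Fin n)} (h : PattEquiv QP w w')
    (h' : PattEquiv QP w' w'') : PattEquiv QP w w'' := Relation.EqvGen.trans _ _ _ h h'
lemma pe_step {w w' : Equiv.Perm (Fin n)} (h : Step3 QP w w') : PattEquiv QP w w' :=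
  Relation.EqvGen.rel _ _ h

/-- Values after a swap of two positions. -/
lemma swap_vals (w : Equiv.Perm (Fin n)) (a b : ℕ) (ha : a < n) (hb : b < n) (l : ℕ) :
    V (w * Equiv.swap (⟨a, ha⟩ : Fin n) ⟨b, hb⟩) l =
      if l = a then V w b else if l = b then V w a else V w l := by
  rcases Nat.lt_or_ge l n with h1 | h1
  · rw [V_def _ h1]
    simp only [Equiv.Perm.mul_apply]
    by_cases h2 : l = a
    · rw [if_pos h2, V_def w hb]
      have h : (⟨l, h1⟩ : Fin n) = ⟨a, ha⟩ := Fin.ext h2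
      rw [h, Equiv.swap_apply_left]
    · by_cases h3 : l = b
      · rw [if_neg h2, if_pos h3, V_def w ha]
        have h : (⟨l, h1⟩ : Fin n) = ⟨b, hb⟩ := Fin.ext h3
        rw [h, Equiv.swap_apply_right]
      · rw [if_neg h2, if_neg h3, V_def w h1]
        rw [Equiv.swap_apply_of_ne_of_ne (by simp [Fin.ext_iff]; exact h2)
          (by simp [Fin.ext_iff]; exact h3)]
  · rw [if_neg (by omega), if_neg (by omega)]
    unfold V
    rw [dif_neg (by omega), dif_neg (by omega)]

/-- Bubble the element at position `i+1` (a strict max of `[i, e]`) right to position `e`. -/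
lemma bubble_right (i e : ℕ) (hie : i + 1 ≤ e) (he : e < n) (w : Equiv.Perm (Fin n))
    (hmax : ∀ l, i ≤ l → l ≤ e → l ≠ i+1 → V w l < V w (i+1)) :
    ∃ w1, PattEquiv QP w w1 ∧
      (∀ l, l < i+1 ∨ e < l → V w1 l = V w l) ∧
      (∀ l, i+1 ≤ l → l < e → V w1 l = V w (l+1)) ∧
      V w1 e = V w (i+1) := by
  obtain ⟨d, hd⟩ : ∃ d, e = i + 1 + d := ⟨e - (i+1), by omega⟩
  revert i w
  induction d with
  | zero =>
    intro i hie w hmax hd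
    exact ⟨w, pe_refl w, fun l h => rfl, fun l h1 h2 => by omega, by rw [hd]⟩
  | succ d ih =>
    intro i hie w hmax hd
    set σ := Equiv.swap (⟨i+1, by omega⟩ : Fin n) ⟨i+2, by omega⟩ with hσ
    set w' := w * σ with hw'def
    have hval : ∀ l, V w' l =
        if l = i+1 then V w (i+2) else if l = i+2 then V w (i+1) else V w l :=
      swap_vals w (i+1) (i+2) (by omega) (by omega)
    have hstep : Step3 QP w w' := by
      apply stepOf w σ i (by omega)
      · intro x hx
        by_contra hc
        push_neg at hc
        exact hx (Equiv.swap_apply_of_ne_of_ne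
          (by simp [Fin.ext_iff]; omega) (by simp [Fin.ext_iff]; omega))
      · left; exact hmax i (by omega) (by omega) (by omega)
      · rw [← hw'def, hval i, hval (i+1), hval (i+2)]
        simp only [if_neg (by omega : ¬ i = i+1), if_neg (by omega : ¬ i = i+2),
          if_neg (by omega : ¬ i+2 = i+1), if_pos rfl]
        right; exact hmax i (by omega) (by omega) (by omega)
    have hmax' : ∀ l, i+1 ≤ l → l ≤ e → l ≠ i+1+1 → V w' l < V w' (i+1+1) := by
      intro l h1 h2 h3
      rw [hval l, hval (i+1+1)]
      simp only [if_neg (by omega : ¬ i+1+1 = i+1), if_pos (by omega : i+1+1 = i+2)]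
      rcases Nat.eq_or_lt_of_le h1 with h4 | h4
      · rw [if_pos (by omega)]
        exact hmax (i+2) (by omega) (by omega) (by omega)
      · rw [if_neg (by omega), if_neg (by omega)]
        exact hmax l (by omega) (by omega) (by omega)
    obtain ⟨w1, he1, hout, hmid, hlast⟩ := ih (i+1) (by omega) w' hmax' (by omega)
    refine ⟨w1, pe_trans (pe_step hstep) he1, ?_, ?_, ?_⟩
    · intro l hor
      rw [hout l (by omega), hval l, if_neg (by omega), if_neg (by omega)]
    · intro l h1 h2
      rcases Nat.eq_or_lt_of_le h1 with h3 | h3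
      · rw [hout l (by omega), hval l, if_pos (by omega)]
        congr 1; omega
      · rw [hmid l (by omega) (by omega), hval (l+1), if_neg (by omega), if_neg (by omega)]
    · rw [hlast, hval (i+1+1), if_neg (by omega), if_pos (by omega)]

/-- Bubble the element at position `b` (a strict max of `[i, b]`) left to position `i+1`. -/
lemma bubble_left (i b : ℕ) (hib : i + 1 ≤ b) (hb : b < n) (w : Equiv.Perm (Fin n))
    (hmax : ∀ l, i ≤ l → l ≤ b → l ≠ b → V w l < V w b) :
    ∃ w2, PattEquiv QP w w2 ∧
      (∀ l, l < i+1 ∨ b < l → V w2 l = V w l) ∧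
      V w2 (i+1) = V w b ∧
      (∀ l, i+1 < l → l ≤ b → V w2 l = V w (l-1)) := by
  obtain ⟨d, hd⟩ : ∃ d, b = i + 1 + d := ⟨b - (i+1), by omega⟩
  revert i w
  induction d with
  | zero =>
    intro i hie w hmax hd
    exact ⟨w, pe_refl w, fun l h => rfl, by rw [hd], fun l h1 h2 => by omega⟩
  | succ d ih =>
    intro i hie w hmax hd
    obtain ⟨w1, he1, hout, hmid1, hmid2⟩ := ih (i+1) (by omega) w
      (fun l a c e => hmax l (by omega) c e) (by omega)
    set σ := Equiv.swap (⟨i+1, by omega⟩ : Fin n) ⟨i+2, by omega⟩ with hσ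
    set w2 := w1 * σ with hw2def
    have hval : ∀ l, V w2 l =
        if l = i+1 then V w1 (i+2) else if l = i+2 then V w1 (i+1) else V w1 l :=
      swap_vals w1 (i+1) (i+2) (by omega) (by omega)
    have hib2 : V w1 (i+2) = V w b := by
      rw [show i+2 = i+1+1 from rfl, hmid1]
    have hii : V w1 i = V w i := hout i (by omega)
    have hstep : Step3 QP w1 w2 := by
      apply stepOf w1 σ i (by omega)
      · intro x hx
        by_contra hc
        push_neg at hc
        exact hx (Equiv.swap_apply_of_ne_of_ne
          (by simp [Fin.ext_iff]; omega) (by simp [Fin.ext_iff]; omega))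
      · right
        rw [hib2, hii]
        exact hmax i (by omega) (by omega) (by omega)
      · left
        rw [← hw2def, hval i, hval (i+1)]
        simp only [if_neg (by omega : ¬ i = i+1), if_neg (by omega : ¬ i = i+2), if_pos rfl]
        rw [hib2, hii]
        exact hmax i (by omega) (by omega) (by omega)
    refine ⟨w2, pe_trans he1 (pe_step hstep), ?_, ?_, ?_⟩
    · intro l hor
      rw [hval l, if_neg (by omega), if_neg (by omega), hout l (by omega)]
    · rw [hval (i+1), if_pos rfl, hib2]
    · intro l h1 h2
      rcases Nat.eq_or_lt_of_le h1 with h3 | h3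
      · rw [hval l, if_neg (by omega), if_pos (by omega), hout (i+1) (by omega)]
        congr 1; omega
      · rw [hval l, if_neg (by omega), if_neg (by omega), hmid2 l (by omega) (by omega)]

/-- There is a position of maximal value in `[a, b]`. -/
lemma maxPos (w : Equiv.Perm (Fin n)) (a b : ℕ) (hab : a ≤ b) (hb : b < n) :
    ∃ j, a ≤ j ∧ j ≤ b ∧ ∀ l, a ≤ l → l ≤ b → V w l ≤ V w j := by
  obtain ⟨d, hd⟩ : ∃ d, b = a + d := ⟨b - a, by omega⟩
  subst hd
  clear hab
  induction d with
  | zero =>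
    refine ⟨a, le_rfl, le_rfl, fun l h1 h2 => ?_⟩
    have h : l = a := by omega
    rw [h]
  | succ d ih =>
    obtain ⟨j0, h1, h2, h3⟩ := ih (by omega)
    rcases le_or_gt (V w (a+d+1)) (V w j0) with h4 | h4
    · refine ⟨j0, h1, by omega, fun l hl1 hl2 => ?_⟩
      rcases le_or_gt l (a+d) with h5 | h5
      · exact h3 l hl1 h5
      · have : l = a+d+1 := by omega
        rw [this]; exact h4
    · refine ⟨a+d+1, by omega, le_rfl, fun l hl1 hl2 => ?_⟩
      rcases le_or_gt l (a+d) with h5 | h5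
      · exact le_of_lt (lt_of_le_of_lt (h3 l hl1 h5) h4)
      · have : l = a+d+1 := by omega
        rw [this]

/-- Fix-up: a segment `[t, e]` (`e ≥ t+3`) with its max at `e` can be transformed so
that the letter at `t` is not the max of `[t, e)`. -/
lemma sideFix (t e : ℕ) (hte : t + 3 ≤ e) (he : e < n) (w : Equiv.Perm (Fin n))
    (hmax : ∀ l, t ≤ l → l < e → V w l < V w e) :
    ∃ v, PattEquiv QP w v ∧
      (∀ l, l < t ∨ e ≤ l → V v l = V w l) ∧
      (∃ j, t < j ∧ j < e ∧ V v t < V v j) ∧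
      (∀ l, t ≤ l → l < e → V v l < V v e) := by
  by_cases hA : ∃ j, t < j ∧ j < e ∧ V w t < V w j
  · exact ⟨w, pe_refl w, fun l h => rfl, hA, hmax⟩
  · push_neg at hA
    obtain ⟨w2, heq2, hout2, hm2a, hm2b⟩ := bubble_left t e (by omega) he w
      (fun l a c d => hmax l a (by omega))
    have h2t : V w2 t = V w t := hout2 t (by omega)
    set σ := Equiv.swap (⟨t, by omega⟩ : Fin n) ⟨t+2, by omega⟩ with hσ
    set w3 := w2 * σ with hw3def
    have hval3 : ∀ l, V w3 l =
        if l = t then V w2 (t+2) else if l = t+2 then V w2 t else V w2 l :=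
      swap_vals w2 t (t+2) (by omega) (by omega)
    have h22 : V w2 (t+2) = V w (t+1) := by
      rw [hm2b (t+2) (by omega) (by omega)]
      congr 1
    have h21 : V w2 (t+1) = V w e := hm2a
    have hstep : Step3 QP w2 w3 := by
      apply stepOf w2 σ t (by omega)
      · intro x hx
        by_contra hc
        push_neg at hc
        exact hx (Equiv.swap_apply_of_ne_of_ne
          (by simp [Fin.ext_iff]; omega) (by simp [Fin.ext_iff]; omega))
      · left
        rw [h2t, h21]
        exact hmax t (by omega) (by omega)
      · left
        rw [← hw3def, hval3 t, hval3 (t+1)]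
        simp only [if_pos rfl, if_neg (by omega : ¬ t+1 = t), if_neg (by omega : ¬ t+1 = t+2)]
        rw [h22, h21]
        exact hmax (t+1) (by omega) (by omega)
    have hv3 : ∀ l, t ≤ l → l ≤ e → l ≠ t+1 → V w3 l < V w3 (t+1) := by
      intro l hl1 hl2 hl3
      rw [hval3 (t+1), if_neg (by omega), if_neg (by omega), h21]
      rcases Nat.eq_or_lt_of_le hl1 with h5 | h5
      · rw [hval3 l, if_pos (by omega), h22]
        exact hmax (t+1) (by omega) (by omega)
      · rcases Nat.lt_or_ge l (t+2) with h6 | h6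
        · omega
        · rcases Nat.eq_or_lt_of_le h6 with h7 | h7
          · rw [hval3 l, if_neg (by omega), if_pos (by omega), h2t]
            exact hmax t (by omega) (by omega)
          · rw [hval3 l, if_neg (by omega), if_neg (by omega),
              hm2b l (by omega) (by omega)]
            exact hmax (l-1) (by omega) (by omega)
    obtain ⟨v, heqv, houtv, hmidv, hlastv⟩ := bubble_right t e (by omega) he w3
      (fun l a b c => hv3 l a b c)
    have hvt : V v t = V w3 t := houtv t (by omega)
    have hvt1 : V v (t+1) = V w3 (t+2) := hmidv (t+1) (by omega) (by omega)
    have hw3t : V w3 t = V w (t+1) := by rw [hval3 t, if_pos rfl, h22]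
    have hw3t2 : V w3 (t+2) = V w t := by
      rw [hval3 (t+2), if_neg (by omega), if_pos rfl, h2t]
    have hve : V v e = V w e := by
      rw [hlastv, hval3 (t+1), if_neg (by omega), if_neg (by omega), h21]
    refine ⟨v, pe_trans heq2 (pe_trans (pe_step hstep) heqv), ?_, ?_, ?_⟩
    · intro l hl
      rcases Nat.lt_or_ge l e with h5 | h5
      · have h6 : l < t := by omega
        rw [houtv l (by omega), hval3 l, if_neg (by omega), if_neg (by omega),
          hout2 l (by omega)]
      · rcases Nat.eq_or_lt_of_le h5 with h6 | h6
        · have h7 : l = e := by omega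
          rw [h7]; exact hve
        · rw [houtv l (by omega), hval3 l, if_neg (by omega), if_neg (by omega),
            hout2 l (by omega)]
    · refine ⟨t+1, by omega, by omega, ?_⟩
      rw [hvt, hvt1, hw3t, hw3t2]
      have h5 := hA (t+1) (by omega) (by omega)
      have h6 := V_ne w (by omega : t+1 < n) (by omega : t < n) (by omega)
      omega
    · intro l hl1 hl2
      rw [hve]
      rcases Nat.eq_or_lt_of_le hl1 with h5 | h5
      · have h7 : l = t := by omega
        rw [h7, hvt, hw3t]
        exact hmax (t+1) (by omega) (by omega)
      · rcases Nat.lt_or_ge l (t+2) with h6 | h6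
        · have h7 : l = t+1 := by omega
          rw [h7, hvt1, hw3t2]
          exact hmax t (by omega) (by omega)
        · rw [hmidv l (by omega) (by omega)]
          rw [hval3 (l+1), if_neg (by omega), if_neg (by omega),
            hm2b (l+1) (by omega) (by omega)]
          exact hmax l (by omega) (by omega)

/-- Values in a window are attained within the window by any permutation agreeing outside. -/
lemma sameSeg (t m : ℕ) (w w' : Equiv.Perm (Fin n)) (hmn : t + m ≤ n)
    (hag : ∀ l, l < t ∨ t + m ≤ l → V w l = V w' l) {l : ℕ} (hl1 : t ≤ l) (hl2 : l < t + m) :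
    ∃ l', t ≤ l' ∧ l' < t + m ∧ V w' l' = V w l := by
  have hv : V w l < n := V_lt w (by omega)
  obtain ⟨l', hl', he⟩ := V_surj w' hv
  by_cases hin : t ≤ l' ∧ l' < t + m
  · exact ⟨l', hin.1, hin.2, he⟩
  · exfalso
    have h1 : V w l' = V w' l' := hag l' (by omega)
    have h2 : V w l' = V w l := by rw [h1, he]
    have := V_inj w hl' (by omega) h2
    omega

/-- Main connectivity lemma: two permutations agreeing outside a window `[t, t+m)`
(`m ≥ 3`), both of whose window-initial letters are not the window max, are equivalent. -/
lemma segEquiv : ∀ m, 3 ≤ m → ∀ t (w w' : Equiv.Perm (Fin n)), t + m ≤ n →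
    (∀ l, l < t ∨ t + m ≤ l → V w l = V w' l) →
    (∃ j, t < j ∧ j < t + m ∧ V w t < V w j) →
    (∃ j, t < j ∧ j < t + m ∧ V w' t < V w' j) →
    PattEquiv QP w w' := by
  intro m
  induction m using Nat.strong_induction_on with
  | _ m ih =>
  intro hm t w w' hmn hag hc hc'
  rcases Nat.lt_or_ge m 4 with hm4 | hm4
  · -- base case m = 3
    have hm3 : m = 3 := by omega
    subst hm3
    set σ := w⁻¹ * w' with hσ
    have hws : w * σ = w' := by rw [hσ, mul_inv_cancel_left]
    have hsupp : ∀ x : Fin n, σ x ≠ x → t ≤ x.val ∧ x.val < t + 3 := by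
      intro x hx
      by_contra hcx
      push_neg at hcx
      have hor : x.val < t ∨ t + 3 ≤ x.val := by omega
      have h1 : V w x.val = V w' x.val := hag x.val hor
      rw [V_def w x.isLt, V_def w' x.isLt] at h1
      have h2 : w ⟨x.val, x.isLt⟩ = w' ⟨x.val, x.isLt⟩ := Fin.ext h1
      apply hx
      show (w⁻¹ * w') x = x
      rw [Equiv.Perm.mul_apply]
      have h3 : w' x = w x := by
        have : (⟨x.val, x.isLt⟩ : Fin n) = x := Fin.eta x x.isLt
        rw [← this, h2]
      rw [h3]
      exact w.symm_apply_apply x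
    have h1 : V w t < V w (t+1) ∨ V w t < V w (t+2) := by
      obtain ⟨j, hj1, hj2, hj3⟩ := hc
      have hor : j = t+1 ∨ j = t+2 := by omega
      rcases hor with h | h <;> rw [h] at hj3
      · exact Or.inl hj3
      · exact Or.inr hj3
    have h2 : V (w*σ) t < V (w*σ) (t+1) ∨ V (w*σ) t < V (w*σ) (t+2) := by
      rw [hws]
      obtain ⟨j, hj1, hj2, hj3⟩ := hc'
      have hor : j = t+1 ∨ j = t+2 := by omega
      rcases hor with h | h <;> rw [h] at hj3
      · exact Or.inl hj3
      · exact Or.inr hj3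
    have hstep := stepOf w σ t (by omega) hsupp h1 h2
    rw [hws] at hstep
    exact pe_step hstep
  · -- inductive step, m ≥ 4
    obtain ⟨m', rfl⟩ : ∃ m', m = m' + 1 := ⟨m-1, by omega⟩
    set e := t + m' with hedef
    have hen : e < n := by omega
    -- strict maxima
    obtain ⟨j0, hj0a, hj0b, hj0c⟩ := maxPos w t e (by omega) hen
    obtain ⟨j0', hj0a', hj0b', hj0c'⟩ := maxPos w' t e (by omega) hen
    have hstr : ∀ l, t ≤ l → l ≤ e → l ≠ j0 → V w l < V w j0 := by
      intro l a b c
      exact lt_of_le_of_ne (hj0c l a b) (V_ne w (by omega) (by omega) c)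
    have hstr' : ∀ l, t ≤ l → l ≤ e → l ≠ j0' → V w' l < V w' j0' := by
      intro l a b c
      exact lt_of_le_of_ne (hj0c' l a b) (V_ne w' (by omega) (by omega) c)
    have htj0 : t < j0 := by
      obtain ⟨j, hj1, hj2, hj3⟩ := hc
      rcases Nat.eq_or_lt_of_le hj0a with h | h
      · exfalso
        have := hj0c j (by omega) (by omega)
        rw [← h] at this
        omega
      · exact h
    have htj0' : t < j0' := by
      obtain ⟨j, hj1, hj2, hj3⟩ := hc'
      rcases Nat.eq_or_lt_of_le hj0a' with h | h
      · exfalso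
        have := hj0c' j (by omega) (by omega)
        rw [← h] at this
        omega
      · exact h
    -- bubble maxima to position e
    obtain ⟨i0, rfl⟩ : ∃ i0, j0 = i0 + 1 := ⟨j0-1, by omega⟩
    obtain ⟨i0', rfl⟩ : ∃ i0', j0' = i0' + 1 := ⟨j0'-1, by omega⟩
    obtain ⟨w1, heq1, hout1, hmid1, hlast1⟩ := bubble_right i0 e (by omega) hen w
      (fun l a b c => hstr l (by omega) b c)
    obtain ⟨w1', heq1', hout1', hmid1', hlast1'⟩ := bubble_right i0' e (by omega) hen w'
      (fun l a b c => hstr' l (by omega) b c)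
    have hmax1 : ∀ l, t ≤ l → l < e → V w1 l < V w1 e := by
      intro l a b
      rw [hlast1]
      rcases Nat.lt_or_ge l (i0+1) with h | h
      · rw [hout1 l (Or.inl h)]
        exact hstr l a (by omega) (by omega)
      · rw [hmid1 l h b]
        exact hstr (l+1) (by omega) (by omega) (by omega)
    have hmax1' : ∀ l, t ≤ l → l < e → V w1' l < V w1' e := by
      intro l a b
      rw [hlast1']
      rcases Nat.lt_or_ge l (i0'+1) with h | h
      · rw [hout1' l (Or.inl h)]
        exact hstr' l a (by omega) (by omega)
      · rw [hmid1' l h b]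
        exact hstr' (l+1) (by omega) (by omega) (by omega)
    obtain ⟨v, heqv, houtv, hcv, hmaxv⟩ := sideFix t e (by omega) hen w1 hmax1
    obtain ⟨v', heqv', houtv', hcv', hmaxv'⟩ := sideFix t e (by omega) hen w1' hmax1'
    -- the two maxima agree
    have hmm : V w (i0+1) = V w' (i0'+1) := by
      apply le_antisymm
      · obtain ⟨l', a, b, hval⟩ := sameSeg t (m'+1) w w' hmn hag
          (by omega : t ≤ i0+1) (by omega)
        rw [← hval]
        exact hj0c' l' a (by omega)
      · obtain ⟨l', a, b, hval⟩ := sameSeg t (m'+1) w' w hmn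
          (fun l hl => (hag l hl).symm) (by omega : t ≤ i0'+1) (by omega)
        rw [← hval]
        exact hj0c l' a (by omega)
    -- agreement of v, v' outside [t, e)
    have hagv : ∀ l, l < t ∨ e ≤ l → V v l = V v' l := by
      intro l hl
      rcases hl with hl | hl
      · rw [houtv l (Or.inl hl), houtv' l (Or.inl hl), hout1 l (Or.inl (by omega)),
          hout1' l (Or.inl (by omega))]
        exact hag l (Or.inl hl)
      · rcases Nat.eq_or_lt_of_le hl with h | h
        · rw [← h, houtv e (Or.inr le_rfl), houtv' e (Or.inr le_rfl), hlast1, hlast1']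
          exact hmm
        · rw [houtv l (Or.inr hl), houtv' l (Or.inr hl), hout1 l (Or.inr h),
            hout1' l (Or.inr h)]
          exact hag l (Or.inr (by omega))
    have hmain : PattEquiv QP v v' := by
      apply ih m' (by omega) (by omega) t v v' (by omega) hagv
      · obtain ⟨j, a, b, c⟩ := hcv
        exact ⟨j, a, by omega, c⟩
      · obtain ⟨j, a, b, c⟩ := hcv'
        exact ⟨j, a, by omega, c⟩
    exact pe_trans heq1 (pe_trans heqv (pe_trans hmain
      (pe_symm (pe_trans heq1' heqv'))))

/-- The letters before position `k` are `n-1, n-2, ...`. -/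
def decp (w : Equiv.Perm (Fin n)) (k : ℕ) : Prop := ∀ j, j < k → V w j = n - 1 - j

lemma V_oob (w : Equiv.Perm (Fin n)) {l : ℕ} (hl : n ≤ l) : V w l = 0 :=
  dif_neg (by omega)

lemma decp_mono {w : Equiv.Perm (Fin n)} {a b : ℕ} (h : b ≤ a) (ha : decp w a) :
    decp w b := fun j hj => ha j (by omega)

lemma decp_val_lt {w : Equiv.Perm (Fin n)} {k : ℕ} (hd : decp w k) (hk : k ≤ n)
    {l : ℕ} (h1 : k ≤ l) (h2 : l < n) : V w l < n - k := by
  by_contra hc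
  push_neg at hc
  have hv : V w l < n := V_lt w h2
  set j' := n - 1 - V w l with hj'
  have hj'k : j' < k := by omega
  have := hd j' hj'k
  have heq : V w j' = V w l := by omega
  have := V_inj w (by omega) h2 heq
  omega

open Classical in
/-- The invariant: length of the maximal initial decreasing-from-the-top prefix. -/
noncomputable def Kinv (w : Equiv.Perm (Fin n)) : ℕ := Nat.findGreatest (decp w) n

open Classical in
lemma Kinv_spec (w : Equiv.Perm (Fin n)) : decp w (Kinv w) :=
  Nat.findGreatest_spec (Nat.zero_le n) (fun j hj => by omega)

open Classical in
lemma Kinv_le (w : Equiv.Perm (Fin n)) : Kinv w ≤ n := Nat.findGreatest_le n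

open Classical in
lemma le_Kinv {w : Equiv.Perm (Fin n)} {k : ℕ} (hk : k ≤ n) (h : decp w k) :
    k ≤ Kinv w := Nat.le_findGreatest hk h

open Classical in
lemma Kinv_not {w : Equiv.Perm (Fin n)} {k : ℕ} (h1 : Kinv w < k) (h2 : k ≤ n) :
    ¬ decp w k := Nat.findGreatest_is_greatest h1 h2

lemma Kinv_ne_pred (hn : 3 ≤ n) (w : Equiv.Perm (Fin n)) : Kinv w ≠ n - 1 := by
  intro hK
  have hd : decp w (n-1) := hK ▸ Kinv_spec w
  have hlast : V w (n-1) = 0 := by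
    obtain ⟨l, hl, hv⟩ := V_surj w (show 0 < n by omega)
    rcases Nat.lt_or_ge l (n-1) with h | h
    · exfalso
      have := hd l h
      omega
    · have : l = n - 1 := by omega
      rw [← this]; exact hv
  have hd2 : decp w n := by
    intro j hj
    rcases Nat.lt_or_ge j (n-1) with h | h
    · exact hd j h
    · have : j = n-1 := by omega
      rw [this, hlast]; omega
  have := le_Kinv le_rfl hd2
  omega

/-- A `Step3` move preserves `decp` (for `k ≤ n`). -/
lemma step_decp {w w' : Equiv.Perm (Fin n)} (h : Step3 QP w w') {k : ℕ} (hk : k ≤ n)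
    (hd : decp w k) : decp w' k := by
  obtain ⟨Q, hQ, i, hi, hag, hp, hq⟩ := h
  have hQQ : Q = QS := by simpa [QP] using hQ
  subst hQQ
  intro j hj
  rcases Nat.lt_or_ge j n with hjn | hjn
  · by_cases hout : j < i ∨ i + 3 ≤ j
    · have := hag ⟨j, hjn⟩ hout
      rw [V_def w' hjn, ← this, ← V_def w hjn]
      exact hd j hj
    · exfalso
      push_neg at hout
      have hik : i < k := by omega
      have hlt : ∀ l, i < l → l < n → V w l < V w i := by
        intro l h1 h2
        rw [hd i (by omega)]
        rcases Nat.lt_or_ge l k with h3 | h3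
        · rw [hd l h3]; omega
        · have := decp_val_lt hd hk h3 h2
          omega
      obtain ⟨p, hpQ, hpat⟩ := hp
      unfold PatAt at hpat
      rw [← V_def w (by omega : i < n), ← V_def w (by omega : i+1 < n),
        ← V_def w (by omega : i+2 < n)] at hpat
      have := qs_lt hpQ hpat
      have h1 := hlt (i+1) (by omega) (by omega)
      have h2 := hlt (i+2) (by omega) (by omega)
      omega
  · rw [V_oob w' hjn]; omega

lemma step3_symm {w w' : Equiv.Perm (Fin n)} (h : Step3 QP w w') : Step3 QP w' w := by
  obtain ⟨Q, hQ, i, hi, hag, hp, hq⟩ := h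
  exact ⟨Q, hQ, i, hi, fun j hj => (hag j hj).symm, hq, hp⟩

lemma step_Kinv {w w' : Equiv.Perm (Fin n)} (h : Step3 QP w w') : Kinv w = Kinv w' := by
  apply le_antisymm
  · exact le_Kinv (Kinv_le w) (step_decp h (Kinv_le w) (Kinv_spec w))
  · exact le_Kinv (Kinv_le w') (step_decp (step3_symm h) (Kinv_le w') (Kinv_spec w'))

lemma pattEquiv_Kinv {w w' : Equiv.Perm (Fin n)} (h : PattEquiv QP w w') :
    Kinv w = Kinv w' := by
  induction h with
  | rel a b hab => exact step_Kinv hab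
  | refl a => rfl
  | symm a b hab ih => exact ih.symm
  | trans a b c hab hbc ih1 ih2 => exact ih1.trans ih2

/-- Full classification: equal invariants imply equivalence. -/
lemma class_of_Kinv (hn : 3 ≤ n) {w w' : Equiv.Perm (Fin n)} (h : Kinv w = Kinv w') :
    PattEquiv QP w w' := by
  set k := Kinv w with hkdef
  have hkn : k ≤ n := Kinv_le w
  have hd : decp w k := Kinv_spec w
  have hd' : decp w' k := h ▸ Kinv_spec w'
  rcases Nat.lt_or_ge k n with hklt | hkge
  · -- k < n, and k ≠ n - 1
    have hkne : k ≠ n - 1 := Kinv_ne_pred hn w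
    have hnd : ¬ decp w (k+1) := Kinv_not (by omega) (by omega)
    have hnd' : ¬ decp w' (k+1) := Kinv_not (by omega) (by omega)
    have hwk : V w k ≠ n - 1 - k := by
      intro hc
      apply hnd
      intro j hj
      rcases Nat.lt_or_ge j k with h1 | h1
      · exact hd j h1
      · have : j = k := by omega
        rw [this, hc]
    have hwk' : V w' k ≠ n - 1 - k := by
      intro hc
      apply hnd'
      intro j hj
      rcases Nat.lt_or_ge j k with h1 | h1
      · exact hd' j h1
      · have : j = k := by omega
        rw [this, hc]
    rcases Nat.lt_or_ge k (n-2) with hk2 | hk2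
    · -- main case: window of size ≥ 3
      have hcond : ∀ (v : Equiv.Perm (Fin n)), decp v k → V v k ≠ n - 1 - k →
          ∃ j, k < j ∧ j < n ∧ V v k < V v j := by
        intro v hdv hnev
        obtain ⟨x, hx, hvx⟩ := V_surj v (show n - 1 - k < n by omega)
        have hxk : k ≤ x := by
          by_contra hc
          push_neg at hc
          have := hdv x hc
          omega
        have hxk2 : x ≠ k := by
          intro hc
          rw [hc] at hvx
          exact hnev hvx
        have hvklt : V v k < n - k := decp_val_lt hdv (by omega) le_rfl (by omega)
        exact ⟨x, by omega, hx, by omega⟩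
      apply segEquiv (n - k) (by omega) k w w' (by omega)
      · intro l hl
        rcases hl with hl | hl
        · rw [hd l hl, hd' l hl]
        · rw [V_oob w (by omega), V_oob w' (by omega)]
      · obtain ⟨j, a, b, c⟩ := hcond w hd hwk
        exact ⟨j, a, by omega, c⟩
      · obtain ⟨j, a, b, c⟩ := hcond w' hd' hwk'
        exact ⟨j, a, by omega, c⟩
    · -- k = n - 2 : the permutation is completely determined
      have hk2' : k = n - 2 := by omega
      have hfix : ∀ (v : Equiv.Perm (Fin n)), decp v k → V v k ≠ n - 1 - k →
          ∀ l, l < n → V v l = if l < k then n - 1 - l else if l = k then 0 else 1 := by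
        intro v hdv hnev l hln
        have h1 : V v k < n - k := decp_val_lt hdv (by omega) le_rfl (by omega)
        have h2 : V v (k+1) < n - k := decp_val_lt hdv (by omega) (by omega) (by omega)
        have h3 : V v k ≠ V v (k+1) := V_ne v (by omega) (by omega) (by omega)
        have hvk : V v k = 0 := by omega
        rcases Nat.lt_or_ge l k with h4 | h4
        · rw [if_pos h4]; exact hdv l h4
        · rcases Nat.eq_or_lt_of_le h4 with h5 | h5
          · rw [if_neg (by omega), if_pos (by omega), ← h5]; exact hvk
          · have h6 : l = k+1 := by omega
            rw [if_neg (by omega), if_neg (by omega), h6]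
            omega
      have : w = w' := by
        apply perm_ext
        intro l hl
        rw [hfix w hd hwk l hl, hfix w' hd' hwk' l hl]
      rw [this]
      exact pe_refl w'
  · -- k = n : both are the full reversal
    have hkn' : k = n := by omega
    have : w = w' := by
      apply perm_ext
      intro l hl
      rw [hd l (by omega), hd' l (by omega)]
    rw [this]
    exact pe_refl w'

/-- The canonical representative with invariant `k`. -/
def cperm (k : ℕ) (hk : k ≤ n) : Equiv.Perm (Fin n) where
  toFun j := ⟨if j.val < k then n - 1 - j.val else j.val - k,
    by have := j.isLt; split_ifs <;> omega⟩
  invFun v := ⟨if n - k ≤ v.val then n - 1 - v.val else v.val + k,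
    by have := v.isLt; split_ifs <;> omega⟩
  left_inv j := by
    apply Fin.ext
    simp only
    have := j.isLt
    split_ifs <;> omega
  right_inv v := by
    apply Fin.ext
    simp only
    have := v.isLt
    split_ifs <;> omega

lemma cperm_val {k : ℕ} (hk : k ≤ n) {l : ℕ} (hl : l < n) :
    V (cperm k hk) l = if l < k then n - 1 - l else l - k := by
  rw [V_def _ hl]; rfl

lemma cperm_decp {k : ℕ} (hk : k ≤ n) : decp (cperm k hk) k := by
  intro j hj
  rw [cperm_val hk (by omega), if_pos hj]

lemma Kinv_cperm_le (hn : 3 ≤ n) {k : ℕ} (hk : k ≤ n - 2) :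
    Kinv (cperm k (by omega : k ≤ n)) = k := by
  apply le_antisymm
  · by_contra hc
    push_neg at hc
    have hd := Kinv_spec (cperm k (by omega : k ≤ n))
    have hd2 : decp (cperm k (by omega : k ≤ n)) (k+1) := decp_mono hc hd
    have := hd2 k (by omega)
    rw [cperm_val _ (by omega), if_neg (by omega)] at this
    omega
  · exact le_Kinv (by omega) (cperm_decp _)

lemma Kinv_cperm_n : Kinv (cperm n (le_refl n)) = n := by
  apply le_antisymm (Kinv_le _)
  apply le_Kinv le_rfl
  intro j hj
  rw [cperm_val _ (by omega), if_pos hj]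

/-- for `n ≥ 3`, the number of classes of `S_n` under the
`{123, 132, 213, 231}`-equivalence is `n`. -/
theorem stmt18 (n : ℕ) (hn : 3 ≤ n) :
    classCount n {({p123, p132, p213, p231} : Set Pat)} = n := by
  have hQP : ({({p123, p132, p213, p231} : Set Pat)} : Set (Set Pat)) = QP := rfl
  rw [hQP]
  unfold classCount
  set g : Equiv.Perm (Fin n) → Fin n := fun w =>
    if _ : Kinv w = n then ⟨n-1, by omega⟩
    else ⟨Kinv w, by have := Kinv_le w; omega⟩ with hg
  have hresp : ∀ a b : Equiv.Perm (Fin n), PattEquiv QP a b → g a = g b := by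
    intro a b hab
    have h : Kinv a = Kinv b := pattEquiv_Kinv hab
    simp only [hg, h]
  set F : Quotient (Setoid.mk (PattEquiv (n := n) QP)
      (Relation.EqvGen.is_equivalence _)) → Fin n := Quotient.lift g hresp with hF
  have hinj : Function.Injective F := by
    intro x y
    refine Quotient.inductionOn₂ x y ?_
    intro a b hab
    apply Quotient.sound
    have hgab : g a = g b := hab
    have hK : Kinv a = Kinv b := by
      simp only [hg] at hgab
      by_cases h1 : Kinv a = n <;> by_cases h2 : Kinv b = n
      · rw [h1, h2]
      · rw [dif_pos h1, dif_neg h2, Fin.ext_iff] at hgab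
        exact absurd hgab.symm (Kinv_ne_pred hn b)
      · rw [dif_neg h1, dif_pos h2, Fin.ext_iff] at hgab
        exact absurd hgab (Kinv_ne_pred hn a)
      · rw [dif_neg h1, dif_neg h2, Fin.ext_iff] at hgab
        exact hgab
    exact class_of_Kinv hn hK
  have hsurj : Function.Surjective F := by
    intro v
    by_cases hv : v.val = n - 1
    · refine ⟨Quotient.mk _ (cperm n (le_refl n)), ?_⟩
      show g (cperm n (le_refl n)) = v
      simp only [hg]
      rw [dif_pos Kinv_cperm_n]
      exact Fin.ext (by simp; omega)
    · have hv2 : v.val ≤ n - 2 := by have := v.isLt; omega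
      refine ⟨Quotient.mk _ (cperm v.val (by omega)), ?_⟩
      show g (cperm v.val (by omega)) = v
      simp only [hg]
      have hK : Kinv (cperm v.val (by omega : v.val ≤ n)) = v.val :=
        Kinv_cperm_le hn hv2
      rw [dif_neg (by omega)]
      exact Fin.ext (by simp [hK])
  rw [Nat.card_eq_of_bijective F ⟨hinj, hsurj⟩]
  simp
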